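/- Let Σ be a nondecreasing function on [0,∞) and suppose for all k ≥ K: |Σ(α₊(k)) − Σ(α₋(k))| ≤ (ω_p/α₊(k))^μ · (|α₊(k) − α₋(k)|/ω_p)^ν, where α_±(k) = ±kv + ħk²/(2M), with μ ≥ 3, 0 < ν ≤ 1, and ħ, v, M, ω_p > 0. Then the double integral I = ∫_K^∞ (1/k) [∫_{α₋(k)}^{α₊(k)} ω² dΣ(ω)] dk is finite whenever K > 2Mv/ħ. -/

import Mathlib

open MeasureTheory

set_option maxHeartbeats 1000000 in
/-- Under the Hölder-type decay condition on the spectral distribution Sg,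
the tail double integral ∫_K^∞ (1/k) ∫_{α₋}^{α₊} ω² dSg dk is finite
whenever K > 2Mv/hbar. -/
theorem tail_integral_finite
    (Sg : StieltjesFunction ℝ) (hbar v M ωp : ℝ)
    (hhbar : 0 < hbar) (hv : 0 < v) (hM : 0 < M) (hωp : 0 < ωp)
    (μ ν : ℝ) (hμ : 3 ≤ μ) (hν0 : 0 < ν) (hν1 : ν ≤ 1)
    (K : ℝ) (hK : 2 * M * v / hbar < K)
    (αm αp : ℝ → ℝ)
    (hαm : αm = fun k => -(k * v) + hbar * k ^ 2 / (2 * M))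
    (hαp : αp = fun k => k * v + hbar * k ^ 2 / (2 * M))
    (hHolder : ∀ k, K ≤ k →
      |Sg (αp k) - Sg (αm k)| ≤ (ωp / αp k) ^ μ * (|αp k - αm k| / ωp) ^ ν) :
    (∫⁻ k in Set.Ioi K,
        ENNReal.ofReal ((1 / k) * ∫ ω in Set.Ioc (αm k) (αp k), ω ^ 2 ∂Sg.measure))
      < ⊤ := by
  have hK0 : 0 < K := lt_trans (by positivity) hK
  have hαpKpos : 0 < αp K := by rw [hαp]; positivity
  -- constants
  obtain ⟨D, hD⟩ : ∃ D : ℝ, D = (ωp / αp K) ^ (μ - 3) := ⟨_, rfl⟩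
  obtain ⟨E, hE⟩ : ∃ E : ℝ, E = (2 * K * v / ωp) ^ (ν - 1) := ⟨_, rfl⟩
  have hDpos : 0 < D := hD ▸ Real.rpow_pos_of_pos (by positivity) _
  have hEpos : 0 < E := hE ▸ Real.rpow_pos_of_pos (by positivity) _
  obtain ⟨C, hC⟩ : ∃ C : ℝ, C = D * E * (2 * v * ωp ^ 2) * (2 * M / hbar) := ⟨_, rfl⟩
  have hCpos : 0 < C := by rw [hC]; positivity
  -- pointwise bound
  have hpt : ∀ k ∈ Set.Ioi K,
      ENNReal.ofReal ((1 / k) * ∫ ω in Set.Ioc (αm k) (αp k), ω ^ 2 ∂Sg.measure)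
        ≤ ENNReal.ofReal (C / k ^ 2) := by
    intro k hk
    have hkK : K < k := hk
    have hk0 : 0 < k := lt_trans hK0 hkK
    have hαpk : 0 < αp k := by rw [hαp]; positivity
    have hαmk : -(αp k) ≤ αm k := by
      rw [hαp, hαm]; simp only
      have : 0 ≤ hbar * k ^ 2 / (2 * M) := by positivity
      linarith
    have hmm : αm k ≤ αp k := by
      rw [hαp, hαm]; simp only; nlinarith
    have hmonoαp : αp K ≤ αp k := by
      rw [hαp]; simp only
      have h1 : K * v ≤ k * v := by nlinarith
      have h2 : K ^ 2 ≤ k ^ 2 := by nlinarith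
      have := hhbar.le
      have h3 : hbar * K ^ 2 / (2 * M) ≤ hbar * k ^ 2 / (2 * M) := by
        apply div_le_div_of_nonneg_right _ (by positivity)
        nlinarith
      linarith
    have hdiff : αp k - αm k = 2 * (k * v) := by rw [hαp, hαm]; ring
    have hS0 : 0 ≤ Sg (αp k) - Sg (αm k) := sub_nonneg.2 (Sg.mono hmm)
    have hmeas : Sg.measure (Set.Ioc (αm k) (αp k))
        = ENNReal.ofReal (Sg (αp k) - Sg (αm k)) := Sg.measure_Ioc _ _
    have hfin : Sg.measure (Set.Ioc (αm k) (αp k)) < ⊤ := by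
      rw [hmeas]; exact ENNReal.ofReal_lt_top
    -- inner integral bound
    have hInner : (∫ ω in Set.Ioc (αm k) (αp k), ω ^ 2 ∂Sg.measure)
        ≤ (αp k) ^ 2 * (Sg (αp k) - Sg (αm k)) := by
      have hb := norm_setIntegral_le_of_norm_le_const (μ := Sg.measure)
        (f := fun ω : ℝ => ω ^ 2) (C := (αp k) ^ 2) hfin ?_
      · calc (∫ ω in Set.Ioc (αm k) (αp k), ω ^ 2 ∂Sg.measure)
            ≤ ‖∫ ω in Set.Ioc (αm k) (αp k), ω ^ 2 ∂Sg.measure‖ := le_abs_self _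
          _ ≤ (αp k) ^ 2 * (Sg.measure (Set.Ioc (αm k) (αp k))).toReal := hb
          _ = (αp k) ^ 2 * (Sg (αp k) - Sg (αm k)) := by
              rw [hmeas, ENNReal.toReal_ofReal hS0]
      · intro ω hω
        rw [Real.norm_eq_abs, abs_of_nonneg (sq_nonneg ω)]
        exact sq_le_sq' (le_trans hαmk hω.1.le) hω.2
    -- Hölder bound
    have hHol : Sg (αp k) - Sg (αm k)
        ≤ (ωp / αp k) ^ μ * (2 * (k * v) / ωp) ^ ν := by
      have h := hHolder k (le_of_lt hkK)
      rw [hdiff] at h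
      have habs : |2 * (k * v)| = 2 * (k * v) := abs_of_nonneg (by positivity)
      rw [habs] at h
      exact le_trans (le_abs_self _) h
    -- rpow bounds
    have hDb : (ωp / αp k) ^ μ ≤ (ωp / αp k) ^ (3 : ℕ) * D := by
      have h1 : (ωp / αp k) ^ μ = (ωp / αp k) ^ (3 : ℝ) * (ωp / αp k) ^ (μ - 3) := by
        rw [← Real.rpow_add (by positivity)]; ring_nf
      rw [h1]
      have h2 : (ωp / αp k) ^ (3 : ℝ) = (ωp / αp k) ^ (3 : ℕ) := by
        rw [← Real.rpow_natCast (ωp / αp k) 3]; norm_num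
      rw [h2]
      apply mul_le_mul_of_nonneg_left _ (by positivity)
      rw [hD]
      apply Real.rpow_le_rpow (by positivity) _ (by linarith)
      exact div_le_div_of_nonneg_left hωp.le hαpKpos hmonoαp
    have hEb : (2 * (k * v) / ωp) ^ ν ≤ E * (2 * (k * v) / ωp) := by
      have hxpos : (0:ℝ) < 2 * (k * v) / ωp := by positivity
      have h1 : (2 * (k * v) / ωp) ^ ν
          = (2 * (k * v) / ωp) ^ (ν - 1) * (2 * (k * v) / ωp) := by
        rw [← Real.rpow_add_one (ne_of_gt hxpos) (ν - 1)]
        ring_nf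
      rw [h1]
      apply mul_le_mul_of_nonneg_right _ (by positivity)
      rw [hE]
      apply Real.rpow_le_rpow_of_nonpos (by positivity) _ (by linarith)
      exact div_le_div_of_nonneg_right (by nlinarith) hωp.le
    -- combine
    apply ENNReal.ofReal_le_ofReal
    rw [div_eq_mul_inv]
    have step1 : (1 / k) * ∫ ω in Set.Ioc (αm k) (αp k), ω ^ 2 ∂Sg.measure
        ≤ (1 / k) * ((αp k) ^ 2 * ((ωp / αp k) ^ (3 : ℕ) * D * (E * (2 * (k * v) / ωp)))) := by
      apply mul_le_mul_of_nonneg_left _ (by positivity)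
      calc (∫ ω in Set.Ioc (αm k) (αp k), ω ^ 2 ∂Sg.measure)
          ≤ (αp k) ^ 2 * (Sg (αp k) - Sg (αm k)) := hInner
        _ ≤ (αp k) ^ 2 * ((ωp / αp k) ^ μ * (2 * (k * v) / ωp) ^ ν) := by
            exact mul_le_mul_of_nonneg_left hHol (by positivity)
        _ ≤ (αp k) ^ 2 * ((ωp / αp k) ^ (3 : ℕ) * D * (E * (2 * (k * v) / ωp))) := by
            apply mul_le_mul_of_nonneg_left _ (by positivity)
            apply mul_le_mul hDb hEb (by positivity) (by positivity)
    refine le_trans step1 ?_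
    have heq : (1 / k) * ((αp k) ^ 2 * ((ωp / αp k) ^ (3 : ℕ) * D * (E * (2 * (k * v) / ωp))))
        = D * E * (2 * v * ωp ^ 2) / (αp k) := by
      field_simp
    rw [heq]
    have hlow : hbar * k ^ 2 / (2 * M) ≤ αp k := by rw [hαp]; simp only; nlinarith
    calc D * E * (2 * v * ωp ^ 2) / (αp k)
        ≤ D * E * (2 * v * ωp ^ 2) / (hbar * k ^ 2 / (2 * M)) := by
          apply div_le_div_of_nonneg_left (by positivity) (by positivity) hlow
      _ = C * (k ^ 2)⁻¹ := by rw [hC]; field_simp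
  -- conclude
  have hmeasg : Measurable fun k : ℝ => ENNReal.ofReal (C / k ^ 2) := by
    apply Measurable.ennreal_ofReal
    exact (measurable_id.pow_const 2).inv.const_mul C
  calc (∫⁻ k in Set.Ioi K,
        ENNReal.ofReal ((1 / k) * ∫ ω in Set.Ioc (αm k) (αp k), ω ^ 2 ∂Sg.measure))
      ≤ ∫⁻ k in Set.Ioi K, ENNReal.ofReal (C / k ^ 2) :=
        setLIntegral_mono hmeasg hpt
    _ < ⊤ := by
        have hint : IntegrableOn (fun k : ℝ => C / k ^ 2) (Set.Ioi K) := by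
          have h1 : IntegrableOn (fun k : ℝ => C * k ^ (-2 : ℝ)) (Set.Ioi K) :=
            (integrableOn_Ioi_rpow_of_lt (by norm_num : (-2:ℝ) < -1) hK0).const_mul C
          refine h1.congr_fun (fun x hx => ?_) measurableSet_Ioi
          have hx0 : 0 < x := lt_trans hK0 hx
          have : x ^ (-2 : ℝ) = (x ^ 2)⁻¹ := by
            rw [Real.rpow_neg hx0.le, ← Real.rpow_natCast x 2]; norm_num
          simp only [this, div_eq_mul_inv]
        have := hint.2
        refine lt_of_le_of_lt (lintegral_mono fun k => ?_) this
        rw [Real.enorm_eq_ofReal_abs]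
        exact ENNReal.ofReal_le_ofReal (le_abs_self _)
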